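/- Let n ∈ ℕ and let w ∈ Cⁿ(ℝ) be positive. Then there exist, for each k = 0,…,n, a finite index set Σ_{n,k} of tuples σ = (σ₁,…,σₙ) with σ_j ∈ {0,…,n−k}, and real constants C_σ for σ ∈ Σ_{n,k} (all independent of f, x and η), such that with P_{n,k}(s) := Σ_{σ∈Σ_{n,k}} C_σ ∏_{j=1}^n w^{(σ_j)}(s), the n-fold iterate of D_{w,x,η} satisfies for all f ∈ Cⁿ(ℝ), all s, x ∈ ℝ and all η ≠ 0: Dⁿ_{w,x,η}(f)(s) = (w(x)ⁿ/(2πiη)ⁿ) · w(s+x)^{−2n} · Σ_{k=0}^n f^{(k)}(s)·P_{n,k}(s+x). -/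

import Mathlib

open MeasureTheory Filter Topology Set
open scoped ENNReal NNReal

noncomputable section

/-- The operator `D_{w,x,η}`, acting on `f ∈ C¹(ℝ)` by
`D_{w,x,η}(f)(s) = (w(x)/(2πiη)) · (f / w(·+x))'(s)`. -/
def Dop (w : ℝ → ℝ) (x η : ℝ) (f : ℝ → ℂ) : ℝ → ℂ := fun s =>
  ((w x : ℂ) / (2 * Real.pi * Complex.I * η)) * deriv (fun u => f u / (w (u + x) : ℂ)) s

namespace DopAux


variable (w : ℝ → ℝ)

/-- product of derivatives of `w` indexed by a tuple `σ` over `range m` -/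
def prodW (m : ℕ) (σ : ℕ → ℕ) (t : ℝ) : ℝ :=
  ∏ j ∈ Finset.range m, iteratedDeriv (σ j) w t

/-- `P` is representable as a finite linear combination of products of
derivatives of `w` of order ≤ b, with normalized tuples. -/
def Rep (m b : ℕ) (P : ℝ → ℝ) : Prop :=
  ∃ S : Finset (ℕ → ℕ), ∃ c : (ℕ → ℕ) → ℝ,
    (∀ σ ∈ S, (∀ j, j < m → σ j ≤ b) ∧ ∀ j, m ≤ j → σ j = 0) ∧
    ∀ t, P t = ∑ σ ∈ S, c σ * prodW w m σ t

variable {w}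

lemma Rep.congr {m b : ℕ} {P P₂ : ℝ → ℝ} (h : Rep w m b P) (he : ∀ t, P t = P₂ t) :
    Rep w m b P₂ := by
  obtain ⟨S, c, hb, hf⟩ := h
  exact ⟨S, c, hb, fun t => (he t) ▸ hf t⟩

lemma Rep.zero (m b : ℕ) : Rep w m b (fun _ => 0) :=
  ⟨∅, fun _ => 0, by simp, by simp⟩

lemma Rep.single (m b : ℕ) (a : ℝ) (σ : ℕ → ℕ) (h1 : ∀ j, j < m → σ j ≤ b)
    (h2 : ∀ j, m ≤ j → σ j = 0) : Rep w m b (fun t => a * prodW w m σ t) :=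
  ⟨{σ}, fun _ => a, by simpa using ⟨h1, h2⟩, by simp⟩

lemma Rep.smul {m b : ℕ} {P : ℝ → ℝ} (a : ℝ) (h : Rep w m b P) :
    Rep w m b (fun t => a * P t) := by
  obtain ⟨S, c, hb, hf⟩ := h
  refine ⟨S, fun σ => a * c σ, hb, fun t => ?_⟩
  simp only []
  rw [hf t, Finset.mul_sum]
  exact Finset.sum_congr rfl fun σ _ => by ring

lemma Rep.add {m b : ℕ} {P P₂ : ℝ → ℝ} (h : Rep w m b P) (h₂ : Rep w m b P₂) :
    Rep w m b (fun t => P t + P₂ t) := by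
  classical
  obtain ⟨S, c, hb, hf⟩ := h
  obtain ⟨S₂, c₂, hb₂, hf₂⟩ := h₂
  refine ⟨S ∪ S₂, fun σ => (if σ ∈ S then c σ else 0) + (if σ ∈ S₂ then c₂ σ else 0),
    fun σ hσ => ?_, fun t => ?_⟩
  · rcases Finset.mem_union.1 hσ with h | h
    · exact hb σ h
    · exact hb₂ σ h
  · simp only []
    rw [hf t, hf₂ t]
    have e1 : ∀ σ ∈ S ∪ S₂, ((if σ ∈ S then c σ else 0) + (if σ ∈ S₂ then c₂ σ else 0))
        * prodW w m σ t = (if σ ∈ S then c σ * prodW w m σ t else 0)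
        + (if σ ∈ S₂ then c₂ σ * prodW w m σ t else 0) := by
      intro σ _; split_ifs <;> ring
    rw [Finset.sum_congr rfl e1, Finset.sum_add_distrib,
      Finset.sum_ite_mem, Finset.sum_ite_mem,
      Finset.union_inter_cancel_left, Finset.union_inter_cancel_right]

lemma Rep.sum {ι : Type*} {m b : ℕ} {u : Finset ι} {P : ι → ℝ → ℝ}
    (h : ∀ i ∈ u, Rep w m b (P i)) :
    Rep w m b (fun t => ∑ i ∈ u, P i t) := by
  classical
  induction u using Finset.induction_on with
  | empty => exact (Rep.zero m b).congr (by simp)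
  | @insert a u₀ hni ih =>
    have := ((h a (Finset.mem_insert_self a u₀)).add
      (ih fun i hi => h i (Finset.mem_insert_of_mem hi)))
    exact this.congr fun t => by rw [Finset.sum_insert hni]

lemma Rep.mono {m b b' : ℕ} {P : ℝ → ℝ} (hb : b ≤ b') (h : Rep w m b P) :
    Rep w m b' P := by
  obtain ⟨S, c, hbnd, hf⟩ := h
  exact ⟨S, c, fun σ hσ => ⟨fun j hj => le_trans ((hbnd σ hσ).1 j hj) hb, (hbnd σ hσ).2⟩, hf⟩

lemma Rep.mulW {m b i : ℕ} {P : ℝ → ℝ} (hi : i ≤ b) (h : Rep w m b P) :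
    Rep w (m + 1) b (fun t => iteratedDeriv i w t * P t) := by
  classical
  obtain ⟨S, c, hb, hf⟩ := h
  refine ⟨S.image (fun σ : ℕ → ℕ => Function.update σ m i), fun σ' => c (Function.update σ' m 0),
    fun σ' hσ' => ?_, fun t => ?_⟩
  · obtain ⟨σ, hσ, rfl⟩ := Finset.mem_image.1 hσ'
    constructor
    · intro j hj
      rcases Nat.lt_succ_iff_lt_or_eq.1 hj with hj | rfl
      · rw [Function.update_of_ne hj.ne]; exact (hb σ hσ).1 j hj
      · simpa using hi
    · intro j hj
      rw [Function.update_of_ne (by omega)]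
      exact (hb σ hσ).2 j (by omega)
  · have hinj : Set.InjOn (fun σ : ℕ → ℕ => Function.update σ m i) ↑S := by
      intro σ hσ τ hτ he
      funext j
      rcases eq_or_ne j m with rfl | hj
      · rw [(hb σ hσ).2 j le_rfl, (hb τ hτ).2 j le_rfl]
      · have := congrFun he j
        simpa [Function.update_of_ne hj] using this
    simp only []
    rw [Finset.sum_image hinj, hf t, Finset.mul_sum]
    refine Finset.sum_congr rfl fun σ hσ => ?_
    have h1 : Function.update (Function.update σ m i) m 0 = σ := by
      funext j
      rcases eq_or_ne j m with rfl | hj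
      · simp [(hb σ hσ).2 j le_rfl]
      · simp [Function.update_of_ne hj]
    have h2 : prodW w (m + 1) (Function.update σ m i) t = prodW w m σ t * iteratedDeriv i w t := by
      rw [prodW, Finset.prod_range_succ]
      congr 1
      · exact Finset.prod_congr rfl fun j hj =>
          by rw [Function.update_of_ne (Finset.mem_range.1 hj).ne]
      · simp
    rw [h1, h2]; ring

lemma Rep.hasDeriv {n : ℕ} (hw : ContDiff ℝ n w) {m b : ℕ} (hb : b < n) {P : ℝ → ℝ}
    (h : Rep w m b P) :
    (∀ t, HasDerivAt P (deriv P t) t) ∧ Rep w m (b + 1) (deriv P) := by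
  classical
  obtain ⟨S, c, hbnd, hf⟩ := h
  have hder : ∀ σ ∈ S, ∀ t : ℝ, HasDerivAt (prodW w m σ)
      (∑ i ∈ Finset.range m, prodW w m (Function.update σ i (σ i + 1)) t) t := by
    intro σ hσ t
    have hterm : ∀ j ∈ Finset.range m, HasDerivAt (iteratedDeriv (σ j) w)
        (iteratedDeriv (σ j + 1) w t) t := by
      intro j hj
      have hd : Differentiable ℝ (iteratedDeriv (σ j) w) :=
        hw.differentiable_iteratedDeriv (σ j)
          (by exact_mod_cast lt_of_le_of_lt ((hbnd σ hσ).1 j (Finset.mem_range.1 hj)) hb)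
      rw [iteratedDeriv_succ]
      exact (hd t).hasDerivAt
    have hp := HasDerivAt.fun_finsetProd hterm
    have hval : (∑ i ∈ Finset.range m,
        (∏ j ∈ (Finset.range m).erase i, iteratedDeriv (σ j) w t) • iteratedDeriv (σ i + 1) w t)
        = ∑ i ∈ Finset.range m, prodW w m (Function.update σ i (σ i + 1)) t := by
      refine Finset.sum_congr rfl fun i hi => ?_
      have h1 : prodW w m (Function.update σ i (σ i + 1)) t
          = iteratedDeriv (σ i + 1) w t
            * ∏ j ∈ (Finset.range m).erase i, iteratedDeriv (σ j) w t := by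
        rw [prodW, ← Finset.mul_prod_erase _ _ hi]
        congr 1
        · simp
        · exact Finset.prod_congr rfl fun j hj =>
            by rw [Function.update_of_ne (Finset.mem_erase.1 hj).1]
      rw [h1, smul_eq_mul]; ring
    rw [hval] at hp
    exact hp
  have hP : ∀ t, HasDerivAt P (∑ σ ∈ S, c σ *
      ∑ i ∈ Finset.range m, prodW w m (Function.update σ i (σ i + 1)) t) t := by
    intro t
    have hs : HasDerivAt (fun u => ∑ σ ∈ S, c σ * prodW w m σ u)
        (∑ σ ∈ S, c σ * ∑ i ∈ Finset.range m, prodW w m (Function.update σ i (σ i + 1)) t) t :=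
      HasDerivAt.fun_sum fun σ hσ => (hder σ hσ t).const_mul (c σ)
    exact (funext hf : P = _) ▸ hs
  have hrep : Rep w m (b + 1) (fun t => ∑ σ ∈ S, c σ *
      ∑ i ∈ Finset.range m, prodW w m (Function.update σ i (σ i + 1)) t) := by
    refine Rep.sum fun σ hσ => Rep.smul _ (Rep.sum fun i hi => ?_)
    refine (Rep.single m (b + 1) 1 _ ?_ ?_).congr fun t => one_mul _
    · intro j hj
      rcases eq_or_ne j i with rfl | hji
      · rw [Function.update_self]
        exact Nat.succ_le_succ ((hbnd σ hσ).1 j hj)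
      · rw [Function.update_of_ne hji]
        exact le_trans ((hbnd σ hσ).1 j hj) (Nat.le_succ b)
    · intro j hj
      have hi' : i < m := Finset.mem_range.1 hi
      rw [Function.update_of_ne (by omega : j ≠ i)]
      exact (hbnd σ hσ).2 j hj
  exact ⟨fun t => ((hP t).differentiableAt).hasDerivAt,
    hrep.congr fun t => ((hP t).deriv).symm⟩



lemma sum_shift_identity (m : ℕ) (a q q' qp : ℕ → ℂ) (Ws W' c : ℂ)
    (hqp0 : qp 0 = 0) (hqps : ∀ k, qp (k + 1) = q k)
    (hq : q (m + 1) = 0) (hq' : q' (m + 1) = 0) :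
    Ws * (∑ k ∈ Finset.range (m + 1), (a (k + 1) * q k + a k * q' k))
      - c * W' * ∑ k ∈ Finset.range (m + 1), a k * q k
    = ∑ k ∈ Finset.range (m + 2), a k * (Ws * (qp k + q' k) - c * W' * q k) := by
  have e1 : ∑ k ∈ Finset.range (m + 1), a (k + 1) * q k
      = ∑ k ∈ Finset.range (m + 1), a k * qp k + a (m + 1) * q m := by
    have h := Finset.sum_range_succ' (fun k => a k * qp k) (m + 1)
    rw [Finset.sum_range_succ (fun k => a k * qp k) (m + 1)] at h
    simp only [hqps, hqp0, mul_zero, add_zero] at h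
    exact h.symm
  have e2 : ∑ k ∈ Finset.range (m + 1), a k * (Ws * (qp k + q' k) - c * W' * q k)
      = Ws * (∑ k ∈ Finset.range (m + 1), a k * qp k)
        + Ws * (∑ k ∈ Finset.range (m + 1), a k * q' k)
        - c * W' * (∑ k ∈ Finset.range (m + 1), a k * q k) := by
    rw [Finset.mul_sum, Finset.mul_sum, Finset.mul_sum, ← Finset.sum_add_distrib,
      ← Finset.sum_sub_distrib]
    exact Finset.sum_congr rfl fun k _ => by ring
  conv_rhs => rw [Finset.sum_range_succ, e2]
  conv_lhs => rw [Finset.sum_add_distrib]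
  rw [mul_add, e1, hq, hq', hqps m]
  ring



lemma final_algebra (m : ℕ) (wx cc Ws W' Nv Ns c21 : ℂ) (hcc : cc ≠ 0) (hWs : Ws ≠ 0) :
    (wx / cc) * ((wx ^ m / cc ^ m) * Nv * (Ws ^ (2 * m + 1))⁻¹
      + (wx ^ m / cc ^ m) * Ns * (-((Ws ^ (2 * m + 1)) ^ 2)⁻¹ * (c21 * Ws ^ (2 * m) * W')))
    = wx ^ (m + 1) / cc ^ (m + 1) * (Ws ^ (2 * (m + 1)))⁻¹ * (Ws * Nv - c21 * W' * Ns) := by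
  have k1 : (Ws ^ (2 * m + 1))⁻¹ = Ws * (Ws ^ (2 * (m + 1)))⁻¹ := by
    conv_rhs => rw [show 2 * (m + 1) = (2 * m + 1) + 1 by omega, pow_succ, mul_inv,
      ← mul_assoc, mul_comm Ws ((Ws ^ (2 * m + 1))⁻¹), mul_assoc, mul_inv_cancel₀ hWs, mul_one]
  have k2 : (-((Ws ^ (2 * m + 1)) ^ 2)⁻¹ * (c21 * Ws ^ (2 * m) * W'))
      = -(c21 * W') * (Ws ^ (2 * (m + 1)))⁻¹ := by
    have e : (Ws ^ (2 * m + 1)) ^ 2 = Ws ^ (2 * (m + 1)) * Ws ^ (2 * m) := by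
      rw [← pow_mul, ← pow_add]; congr 1; omega
    rw [e, mul_inv]
    have h := inv_mul_cancel₀ (pow_ne_zero (2 * m) hWs)
    linear_combination (-(c21 * W') * (Ws ^ (2 * (m + 1)))⁻¹) * h
  rw [k1, k2]
  ring

lemma main_claim (n : ℕ) (w : ℝ → ℝ) (hw : ContDiff ℝ n w) (hwpos : ∀ s : ℝ, 0 < w s) :
    ∀ m, m ≤ n → ∃ Q : ℕ → ℝ → ℝ,
      (∀ k, Rep w m (m - k) (Q k)) ∧ (∀ k, m < k → ∀ t, Q k t = 0) ∧
      ∀ f : ℝ → ℂ, ContDiff ℝ n f → ∀ s x η : ℝ, η ≠ 0 →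
        (Dop w x η)^[m] f s =
          ((w x : ℂ) ^ m / (2 * Real.pi * Complex.I * η) ^ m) * ((w (s + x) : ℂ) ^ (2 * m))⁻¹ *
            ∑ k ∈ Finset.range (m + 1), iteratedDeriv k f s * ((Q k (s + x) : ℝ) : ℂ) := by
  intro m
  induction m with
  | zero =>
    intro _
    refine ⟨fun k => if k = 0 then (fun _ => 1) else fun _ => 0, fun k => ?_, fun k hk t => ?_,
      fun f hf s x η hη => ?_⟩
    · rcases eq_or_ne k 0 with rfl | hk
      · refine (Rep.single 0 0 1 (fun _ => 0) (by omega) (fun _ _ => rfl)).congr fun t => ?_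
        simp [prodW]
      · exact (Rep.zero _ _).congr fun t => by simp [hk]
    · simp [hk.ne']
    · simp [prodW]
  | succ m ih =>
    intro hm1
    obtain ⟨Q, hQrep, hQzero, hform⟩ := ih (le_trans (Nat.le_succ m) hm1)
    have hder : ∀ k, (∀ t, HasDerivAt (Q k) (deriv (Q k) t) t) ∧
        Rep w m (m - k + 1) (deriv (Q k)) :=
      fun k => (hQrep k).hasDeriv hw (by omega)
    set Qp : ℕ → ℝ → ℝ := fun k => Nat.casesOn k (fun _ => 0) Q with hQp
    refine ⟨fun k t => w t * (Qp k t + deriv (Q k) t) - (2 * m + 1) * deriv w t * Q k t,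
      fun k => ?_, fun k hk t => ?_, fun f hf s x η hη => ?_⟩
    · -- representability
      have rep1 : Rep w (m + 1) (m + 1 - k) (fun t => w t * Qp k t) := by
        match k with
        | 0 => exact (Rep.zero _ _).congr fun t => by simp [hQp]
        | (k' + 1) =>
          have := ((hQrep k').mono (by omega : m - k' ≤ m + 1 - (k' + 1))).mulW
            (by omega : 0 ≤ m + 1 - (k' + 1))
          exact this.congr fun t => by simp [hQp]
      have rep2 : Rep w (m + 1) (m + 1 - k) (fun t => w t * deriv (Q k) t) := by
        rcases le_or_gt k m with hk | hk
        · have := ((hder k).2.mono (by omega : m - k + 1 ≤ m + 1 - k)).mulW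
            (by omega : 0 ≤ m + 1 - k)
          exact this.congr fun t => by simp
        · have hQk0 : Q k = fun _ => 0 := funext (hQzero k hk)
          exact (Rep.zero _ _).congr fun t => by rw [hQk0]; simp
      have rep3 : Rep w (m + 1) (m + 1 - k) (fun t => deriv w t * Q k t) := by
        rcases le_or_gt k m with hk | hk
        · have := ((hQrep k).mono (by omega : m - k ≤ m + 1 - k)).mulW
            (by omega : 1 ≤ m + 1 - k)
          exact this.congr fun t => by simp [iteratedDeriv_one]
        · have hQk0 : Q k = fun _ => 0 := funext (hQzero k hk)
          exact (Rep.zero _ _).congr fun t => by rw [hQk0]; simp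
      exact ((rep1.add rep2).add (rep3.smul (-(2 * m + 1)))).congr fun t => by ring
    · -- vanishing for k > m + 1
      match k, hk with
      | (k' + 1), hk =>
        have h1 : Q k' t = 0 := hQzero k' (by omega) t
        have h2 : Q (k' + 1) = fun _ => 0 := funext (hQzero (k' + 1) (by omega))
        simp [hQp, h1, h2]
    · -- the formula
      have hne : ∀ u : ℝ, ((w (u + x) : ℝ) : ℂ) ≠ 0 :=
        fun u => Complex.ofReal_ne_zero.2 (hwpos (u + x)).ne'
      have hcc : (2 * (Real.pi : ℂ) * Complex.I * (η : ℂ)) ≠ 0 := by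
        simp [Real.pi_ne_zero, Complex.I_ne_zero, hη, Complex.ofReal_ne_zero]
      set N : ℝ → ℂ := fun u => ∑ k ∈ Finset.range (m + 1),
        iteratedDeriv k f u * ((Q k (u + x) : ℝ) : ℂ) with hN
      have hfun : (fun u => (Dop w x η)^[m] f u / ((w (u + x) : ℝ) : ℂ))
          = fun u => ((w x : ℂ) ^ m / (2 * Real.pi * Complex.I * η) ^ m) * N u
              * (((w (u + x) : ℝ) : ℂ) ^ (2 * m + 1))⁻¹ := by
        funext u
        rw [hform f hf u x η hη]
        simp only [hN]
        rw [pow_succ]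
        field_simp
      have hwdiff : Differentiable ℝ w :=
        hw.differentiable (by exact_mod_cast (by omega : n ≠ 0))
      have hw1 : HasDerivAt (fun u : ℝ => ((w (u + x) : ℝ) : ℂ))
          ((deriv w (s + x) : ℝ) : ℂ) s :=
        (((hwdiff (s + x)).hasDerivAt).comp_add_const s x).ofReal_comp
      have hWpow : HasDerivAt (fun u : ℝ => ((w (u + x) : ℝ) : ℂ) ^ (2 * m + 1))
          (((2 * m + 1 : ℕ) : ℂ) * ((w (s + x) : ℝ) : ℂ) ^ (2 * m)
            * ((deriv w (s + x) : ℝ) : ℂ)) s := by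
        have h := HasDerivAt.comp (x := s)
          (hasDerivAt_pow (2 * m + 1) (((w (s + x) : ℝ) : ℂ))) hw1
        simpa [Function.comp_def] using h
      have hinv : HasDerivAt (fun u : ℝ => (((w (u + x) : ℝ) : ℂ) ^ (2 * m + 1))⁻¹)
          (-(((((w (s + x) : ℝ) : ℂ)) ^ (2 * m + 1)) ^ 2)⁻¹
            * (((2 * m + 1 : ℕ) : ℂ) * ((w (s + x) : ℝ) : ℂ) ^ (2 * m)
              * ((deriv w (s + x) : ℝ) : ℂ))) s :=
        HasDerivAt.comp (x := s) (hasDerivAt_inv (pow_ne_zero _ (hne s))) hWpow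
      set N'v : ℂ := ∑ k ∈ Finset.range (m + 1),
        (iteratedDeriv (k + 1) f s * ((Q k (s + x) : ℝ) : ℂ)
          + iteratedDeriv k f s * ((deriv (Q k) (s + x) : ℝ) : ℂ)) with hN'v
      have hNder : HasDerivAt N N'v s := by
        rw [hN, hN'v]
        refine HasDerivAt.fun_sum fun k hk => ?_
        have hfk : HasDerivAt (iteratedDeriv k f) (iteratedDeriv (k + 1) f s) s := by
          rw [iteratedDeriv_succ]
          have hkm : k < m + 1 := Finset.mem_range.1 hk
          have hk' : (k : WithTop ℕ∞) < (n : WithTop ℕ∞) := by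
            exact_mod_cast (by omega : k < n)
          exact ((hf.differentiable_iteratedDeriv k hk') s).hasDerivAt
        have hQk : HasDerivAt (fun u : ℝ => ((Q k (u + x) : ℝ) : ℂ))
            ((deriv (Q k) (s + x) : ℝ) : ℂ) s :=
          (((hder k).1 (s + x)).comp_add_const s x).ofReal_comp
        exact hfk.mul hQk
      have hH : HasDerivAt (fun u => ((w x : ℂ) ^ m / (2 * Real.pi * Complex.I * η) ^ m) * N u
            * (((w (u + x) : ℝ) : ℂ) ^ (2 * m + 1))⁻¹)
          ((((w x : ℂ) ^ m / (2 * Real.pi * Complex.I * η) ^ m) * N'v)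
              * (((w (s + x) : ℝ) : ℂ) ^ (2 * m + 1))⁻¹
            + (((w x : ℂ) ^ m / (2 * Real.pi * Complex.I * η) ^ m) * N s)
              * (-(((((w (s + x) : ℝ) : ℂ)) ^ (2 * m + 1)) ^ 2)⁻¹
                * (((2 * m + 1 : ℕ) : ℂ) * ((w (s + x) : ℝ) : ℂ) ^ (2 * m)
                  * ((deriv w (s + x) : ℝ) : ℂ)))) s :=
        (hNder.const_mul _).mul hinv
      -- the sum identity
      have hQm1 : Q (m + 1) = fun _ => 0 := funext (hQzero (m + 1) (by omega))
      have hsum := sum_shift_identity m (fun k => iteratedDeriv k f s)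
        (fun k => ((Q k (s + x) : ℝ) : ℂ)) (fun k => ((deriv (Q k) (s + x) : ℝ) : ℂ))
        (fun k => ((Qp k (s + x) : ℝ) : ℂ)) ((w (s + x) : ℝ) : ℂ)
        ((deriv w (s + x) : ℝ) : ℂ) ((2 * m + 1 : ℕ) : ℂ)
        (by simp [hQp]) (fun k => rfl)
        (by show ((Q (m + 1) (s + x) : ℝ) : ℂ) = 0; rw [hQm1]; simp)
        (by show ((deriv (Q (m + 1)) (s + x) : ℝ) : ℂ) = 0; rw [hQm1]; simp)
      rw [Function.iterate_succ_apply']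
      show ((w x : ℂ) / (2 * Real.pi * Complex.I * η))
          * deriv (fun u => (Dop w x η)^[m] f u / ((w (u + x) : ℝ) : ℂ)) s = _
      rw [hfun, hH.deriv]
      have hgoalsum : ∑ k ∈ Finset.range (m + 1 + 1), iteratedDeriv k f s
            * (((fun k t => w t * (Qp k t + deriv (Q k) t)
                - (2 * m + 1) * deriv w t * Q k t) k (s + x) : ℝ) : ℂ)
          = ∑ k ∈ Finset.range (m + 2), iteratedDeriv k f s
              * (((w (s + x) : ℝ) : ℂ) * (((Qp k (s + x) : ℝ) : ℂ)
                  + ((deriv (Q k) (s + x) : ℝ) : ℂ))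
                - ((2 * m + 1 : ℕ) : ℂ) * ((deriv w (s + x) : ℝ) : ℂ)
                  * ((Q k (s + x) : ℝ) : ℂ)) := by
        refine Finset.sum_congr rfl fun k _ => ?_
        push_cast
        ring
      beta_reduce at hsum
      rw [hgoalsum, ← hsum, ← hN'v]
      have hNs : (∑ k ∈ Finset.range (m + 1),
          iteratedDeriv k f s * ((Q k (s + x) : ℝ) : ℂ)) = N s := rfl
      rw [hNs]
      exact final_algebra m _ _ _ _ _ _ _ hcc (hne s)
  
end DopAux

theorem Dop_iterate_formula (n : ℕ) (w : ℝ → ℝ)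
    (hw : ContDiff ℝ n w) (hwpos : ∀ s : ℝ, 0 < w s) :
    ∃ (Sig : ℕ → Finset (Fin n → ℕ)) (Cc : ℕ → (Fin n → ℕ) → ℝ),
      (∀ k ≤ n, ∀ σ ∈ Sig k, ∀ j : Fin n, σ j ≤ n - k) ∧
      ∀ f : ℝ → ℂ, ContDiff ℝ n f → ∀ s x η : ℝ, η ≠ 0 →
        (Dop w x η)^[n] f s =
          ((w x : ℂ) ^ n / (2 * Real.pi * Complex.I * η) ^ n) * ((w (s + x) : ℂ) ^ (2 * n))⁻¹ *
            ∑ k ∈ Finset.range (n + 1),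
              iteratedDeriv k f s *
                ∑ σ ∈ Sig k, (Cc k σ : ℂ) * ∏ j : Fin n, ((iteratedDeriv (σ j) w (s + x) : ℝ) : ℂ) := by
  classical
  obtain ⟨Q, hQrep, hQzero, hform⟩ := DopAux.main_claim n w hw hwpos n le_rfl
  choose S c hb hv using hQrep
  have hinj : ∀ k, Set.InjOn (fun (σ : ℕ → ℕ) (j : Fin n) => σ (j : ℕ)) ↑(S k) := by
    intro k σ hσ τ hτ he
    funext j
    rcases lt_or_ge j n with hj | hj
    · exact congrFun he ⟨j, hj⟩
    · rw [(hb k σ hσ).2 j hj, (hb k τ hτ).2 j hj]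
  refine ⟨fun k => (S k).image (fun (σ : ℕ → ℕ) (j : Fin n) => σ (j : ℕ)),
    fun k τ => c k (fun j => if h : j < n then τ ⟨j, h⟩ else 0), ?_, ?_⟩
  · intro k hk τ hτ j
    obtain ⟨σ, hσ, rfl⟩ := Finset.mem_image.1 hτ
    exact (hb k σ hσ).1 j j.isLt
  · intro f hf s x η hη
    rw [hform f hf s x η hη]
    congr 1
    refine Finset.sum_congr rfl fun k hk => ?_
    congr 1
    rw [hv k (s + x)]
    rw [Finset.sum_image (hinj k)]
    simp only [DopAux.prodW]
    push_cast
    refine Finset.sum_congr rfl fun σ hσ => ?_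
    congr 1
    · have he : (fun j => if h : j < n then σ j else 0) = σ := by
        funext j
        split_ifs with h
        · rfl
        · exact ((hb k σ hσ).2 j (le_of_not_gt h)).symm
      rw [he]
    · rw [Finset.prod_range fun i => ((iteratedDeriv (σ i) w (s + x) : ℝ) : ℂ)]
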